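/- (Parameter theorem for module ends) Let C be a finite tensor category, M a left C-module category, A, B categories, and S : M^op × M → Fun(A, B) a functor equipped with a pre-balancing β. For each A ∈ A let S_A : M^op × M → B be the evaluation S_A(M,N) = S(M,N)(A) with the induced pre-balancing β^A. If all module ends ∮_{M∈M}(S_A, β^A) exist, then the assignment A ↦ ∮_{M∈M}(S_A, β^A) extends to a functor 𝔖 : A → B which is a module end of S in Fun(A,B), i.e. 𝔖 ≅ (∮_{M∈M}(S,β))(−). -/

import Mathlib

/-!
Common framework: left/right module categories over a tensor category,
module functors, module natural transformations, pre-balancings and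
module (co)ends, internal Homs, following Bortolussi–Mombelli,
"(co)ends for representations of tensor categories".

Throughout, a *finite tensor category* is modelled as an abelian,
`k`-linear, monoidally preadditive/linear rigid monoidal category with
simple unit object (finiteness of the underlying abelian category is not
used in the statements below and is omitted).
-/

open CategoryTheory Category MonoidalCategory Opposite

universe w w₁ w₂ v u v₁ u₁ v₂ u₂ v₃ u₃ v₄ u₄

namespace TensorModuleEnd

variable (C : Type u) [Category.{v} C] [MonoidalCategory C]

/-- A left module category structure of a monoidal category `C` on a category `M`.
The action bifunctor is encoded as a functor `act : C ⥤ M ⥤ M`, with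
`X ▷ m = (act.obj X).obj m`, together with coherent associativity and
unit isomorphisms (equations (1), (2) of the paper). -/
structure LeftModuleStr (M : Type u₁) [Category.{v₁} M] where
  act : C ⥤ M ⥤ M
  assoc : ∀ (X Y : C) (m : M),
    (act.obj (X ⊗ Y)).obj m ≅ (act.obj X).obj ((act.obj Y).obj m)
  unitIso : ∀ (m : M), (act.obj (𝟙_ C)).obj m ≅ m
  assoc_natural_left : ∀ {X X' : C} (f : X ⟶ X') (Y : C) (m : M),
    (act.map (f ▷ Y)).app m ≫ (assoc X' Y m).hom =
      (assoc X Y m).hom ≫ (act.map f).app ((act.obj Y).obj m)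
  assoc_natural_mid : ∀ (X : C) {Y Y' : C} (g : Y ⟶ Y') (m : M),
    (act.map (X ◁ g)).app m ≫ (assoc X Y' m).hom =
      (assoc X Y m).hom ≫ (act.obj X).map ((act.map g).app m)
  assoc_natural_obj : ∀ (X Y : C) {m m' : M} (h : m ⟶ m'),
    (act.obj (X ⊗ Y)).map h ≫ (assoc X Y m').hom =
      (assoc X Y m).hom ≫ (act.obj X).map ((act.obj Y).map h)
  unit_natural : ∀ {m m' : M} (h : m ⟶ m'),
    (act.obj (𝟙_ C)).map h ≫ (unitIso m').hom = (unitIso m).hom ≫ h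
  pentagon : ∀ (X Y Z : C) (m : M),
    (assoc (X ⊗ Y) Z m).hom ≫ (assoc X Y ((act.obj Z).obj m)).hom =
      (act.map (α_ X Y Z).hom).app m ≫ (assoc X (Y ⊗ Z) m).hom ≫
        (act.obj X).map ((assoc Y Z m).hom)
  triangle : ∀ (X : C) (m : M),
    (assoc X (𝟙_ C) m).hom ≫ (act.obj X).map ((unitIso m).hom) =
      (act.map (ρ_ X).hom).app m

/-- A right module category structure of `C` on `M`; here `(act.obj X).obj m`
plays the role of `m ◁ X` (equations (11), (12) of the paper). -/
structure RightModuleStr (M : Type u₁) [Category.{v₁} M] where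
  act : C ⥤ M ⥤ M
  assoc : ∀ (X Y : C) (m : M),
    (act.obj (X ⊗ Y)).obj m ≅ (act.obj Y).obj ((act.obj X).obj m)
  unitIso : ∀ (m : M), (act.obj (𝟙_ C)).obj m ≅ m
  assoc_natural_left : ∀ {X X' : C} (f : X ⟶ X') (Y : C) (m : M),
    (act.map (f ▷ Y)).app m ≫ (assoc X' Y m).hom =
      (assoc X Y m).hom ≫ (act.obj Y).map ((act.map f).app m)
  assoc_natural_mid : ∀ (X : C) {Y Y' : C} (g : Y ⟶ Y') (m : M),
    (act.map (X ◁ g)).app m ≫ (assoc X Y' m).hom =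
      (assoc X Y m).hom ≫ (act.map g).app ((act.obj X).obj m)
  assoc_natural_obj : ∀ (X Y : C) {m m' : M} (h : m ⟶ m'),
    (act.obj (X ⊗ Y)).map h ≫ (assoc X Y m').hom =
      (assoc X Y m).hom ≫ (act.obj Y).map ((act.obj X).map h)
  unit_natural : ∀ {m m' : M} (h : m ⟶ m'),
    (act.obj (𝟙_ C)).map h ≫ (unitIso m').hom = (unitIso m).hom ≫ h
  pentagon : ∀ (X Y Z : C) (m : M),
    (act.map (α_ X Y Z).hom).app m ≫ (assoc X (Y ⊗ Z) m).hom ≫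
        (assoc Y Z ((act.obj X).obj m)).hom =
      (assoc (X ⊗ Y) Z m).hom ≫ (act.obj Z).map ((assoc X Y m).hom)
  triangle : ∀ (X : C) (m : M),
    (assoc (𝟙_ C) X m).hom ≫ (act.obj X).map ((unitIso m).hom) =
      (act.map (λ_ X).hom).app m

variable {C}

/-- A left module category `M` over `C` is *exact* if `P ▷ m` is projective in `M`
for every projective `P : C` and every `m : M`. -/
def LeftModuleStr.IsExact {M : Type u₁} [Category.{v₁} M] (ρ : LeftModuleStr C M) : Prop :=
  ∀ (P : C), Projective P → ∀ m : M, Projective ((ρ.act.obj P).obj m)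

/-- A `C`-module functor `(F, c)` between left `C`-module categories
(equations (3), (4) of the paper). -/
structure ModuleFunctor {M : Type u₁} [Category.{v₁} M] {N : Type u₂} [Category.{v₂} N]
    (ρ : LeftModuleStr C M) (σ : LeftModuleStr C N) where
  F : M ⥤ N
  str : ∀ (X : C) (m : M), F.obj ((ρ.act.obj X).obj m) ≅ (σ.act.obj X).obj (F.obj m)
  str_natural_obj : ∀ (X : C) {m m' : M} (h : m ⟶ m'),
    F.map ((ρ.act.obj X).map h) ≫ (str X m').hom =
      (str X m).hom ≫ (σ.act.obj X).map (F.map h)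
  str_natural_tensor : ∀ {X X' : C} (f : X ⟶ X') (m : M),
    F.map ((ρ.act.map f).app m) ≫ (str X' m).hom =
      (str X m).hom ≫ (σ.act.map f).app (F.obj m)
  pentagon : ∀ (X Y : C) (m : M),
    F.map ((ρ.assoc X Y m).hom) ≫ (str X ((ρ.act.obj Y).obj m)).hom ≫
        (σ.act.obj X).map ((str Y m).hom) =
      (str (X ⊗ Y) m).hom ≫ (σ.assoc X Y (F.obj m)).hom
  unit : ∀ (m : M),
    (str (𝟙_ C) m).hom ≫ (σ.unitIso (F.obj m)).hom = F.map ((ρ.unitIso m).hom)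

/-- A module natural transformation between module functors (equation (5)). -/
def IsModuleNatTrans {M : Type u₁} [Category.{v₁} M] {N : Type u₂} [Category.{v₂} N]
    {ρ : LeftModuleStr C M} {σ : LeftModuleStr C N}
    (F G : ModuleFunctor ρ σ) (θ : F.F ⟶ G.F) : Prop :=
  ∀ (X : C) (m : M),
    θ.app ((ρ.act.obj X).obj m) ≫ (G.str X m).hom =
      (F.str X m).hom ≫ (σ.act.obj X).map (θ.app m)

/-- The category `Fun_C(M, N)` of `C`-module functors and module natural
transformations. -/
instance moduleFunctorCategory {M : Type u₁} [Category.{v₁} M] {N : Type u₂} [Category.{v₂} N]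
    (ρ : LeftModuleStr C M) (σ : LeftModuleStr C N) :
    Category (ModuleFunctor ρ σ) where
  Hom F G := { θ : F.F ⟶ G.F // IsModuleNatTrans F G θ }
  id F := ⟨𝟙 F.F, by intro X m; simp⟩
  comp {F G H} θ θ' := ⟨θ.1 ≫ θ'.1, by
    intro X m
    have h1 := θ.2 X m
    have h2 := θ'.2 X m
    simp only [NatTrans.comp_app, Category.assoc, Functor.map_comp]
    rw [h2, reassoc_of% h1]⟩
  id_comp f := by apply Subtype.ext; simp
  comp_id f := by apply Subtype.ext; simp
  assoc f g h := by apply Subtype.ext; simp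

section ModuleEnds

variable {M : Type u₁} [Category.{v₁} M] {A : Type u₂} [Category.{v₂} A]

/-- `S(f, g)` for a functor `S : Mᵒᵖ × M ⥤ A`, contravariant in the first
variable: here `f : m' ⟶ m` and `g : n ⟶ n'`. -/
abbrev smap (S : Mᵒᵖ × M ⥤ A) {m m' n n' : M} (f : m' ⟶ m) (g : n ⟶ n') :
    S.obj (op m, n) ⟶ S.obj (op m', n') :=
  S.map ((f.op, g) : ((op m, n) : Mᵒᵖ × M) ⟶ (op m', n'))

variable [RightRigidCategory C]

/-- A *pre-balancing* for a functor `S : Mᵒᵖ × M ⥤ A`, where `M` is a left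
`C`-module category: a family of natural isomorphisms
`β^X_{m,n} : S(m, X ▷ n) ≅ S(Xᘁ ▷ m, n)`. -/
structure PreBalancing (ρ : LeftModuleStr C M) (S : Mᵒᵖ × M ⥤ A) where
  iso : ∀ (X : C) (m n : M),
    S.obj (op m, (ρ.act.obj X).obj n) ≅ S.obj (op ((ρ.act.obj Xᘁ).obj m), n)
  natural : ∀ (X : C) {m m' n n' : M} (f : m' ⟶ m) (g : n ⟶ n'),
    smap S f ((ρ.act.obj X).map g) ≫ (iso X m' n').hom =
      (iso X m n).hom ≫ smap S ((ρ.act.obj Xᘁ).map f) g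
  natural_tensor : ∀ {X X' : C} (f : X ⟶ X') (m n : M),
    smap S (𝟙 m) ((ρ.act.map f).app n) ≫ (iso X' m n).hom =
      (iso X m n).hom ≫ smap S ((ρ.act.map (fᘁ)).app m) (𝟙 n)

variable (ρ : LeftModuleStr C M) (S : Mᵒᵖ × M ⥤ A)

/-- The canonical morphism `(Xᘁ ⊗ X) ▷ m ⟶ m` induced by the evaluation
(and the unit isomorphism). -/
def evActHom (X : C) (m : M) : (ρ.act.obj (Xᘁ ⊗ X)).obj m ⟶ m :=
  (ρ.act.map (ε_ X Xᘁ)).app m ≫ (ρ.unitIso m).hom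

/-- The canonical morphism `m ⟶ (X ⊗ Xᘁ) ▷ m` induced by the coevaluation. -/
def coevActHom (X : C) (m : M) : m ⟶ (ρ.act.obj (X ⊗ Xᘁ)).obj m :=
  (ρ.unitIso m).inv ≫ (ρ.act.map (η_ X Xᘁ)).app m

variable {ρ S}

/-- A *wedge* for `(S, β)` relative to a class `P` of objects of `C`:
a dinatural family `π` satisfying the module-end compatibility (equation (5)
of Section 3 of the paper) for every `X` in `P`.  Taking `P = fun _ => True`
gives module-end wedges; taking `P = fun _ => False` gives ordinary wedges
(for the ordinary end); an intermediate `P` corresponds to restricting the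
module structure to a tensor subcategory. -/
structure ModuleEndCone (β : PreBalancing ρ S) (P : C → Prop) where
  pt : A
  π : ∀ m : M, pt ⟶ S.obj (op m, m)
  dinatural : ∀ {m n : M} (f : m ⟶ n),
    π m ≫ smap S (𝟙 m) f = π n ≫ smap S f (𝟙 n)
  compat : ∀ (X : C), P X → ∀ (m : M),
    π m ≫ smap S (evActHom ρ X m) (𝟙 m) =
      π ((ρ.act.obj X).obj m) ≫ (β.iso X ((ρ.act.obj X).obj m) m).hom ≫
        smap S ((ρ.assoc Xᘁ X m).hom) (𝟙 m)

/-- Universality: `E` is a *module end* of `(S, β)` (relative to `P`). -/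
def IsModuleEnd {β : PreBalancing ρ S} {P : C → Prop} (E : ModuleEndCone β P) : Prop :=
  ∀ (E' : ModuleEndCone β P), ∃! h : E'.pt ⟶ E.pt, ∀ m : M, h ≫ E.π m = E'.π m

/-- A *cowedge* for `(S, β)` relative to `P` (for module coends,
equation (6) of the paper). -/
structure ModuleCoendCocone (β : PreBalancing ρ S) (P : C → Prop) where
  pt : A
  ι : ∀ m : M, S.obj (op m, m) ⟶ pt
  dinatural : ∀ {m n : M} (f : m ⟶ n),
    smap S f (𝟙 m) ≫ ι m = smap S (𝟙 n) f ≫ ι n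
  compat : ∀ (X : C), P X → ∀ (m : M),
    ι m = smap S (𝟙 m) (coevActHom ρ X m ≫ (ρ.assoc X Xᘁ m).hom) ≫
        (β.iso X m ((ρ.act.obj Xᘁ).obj m)).hom ≫ ι ((ρ.act.obj Xᘁ).obj m)

/-- Universality: `E` is a *module coend* of `(S, β)` (relative to `P`). -/
def IsModuleCoend {β : PreBalancing ρ S} {P : C → Prop} (E : ModuleCoendCocone β P) : Prop :=
  ∀ (E' : ModuleCoendCocone β P), ∃! h : E.pt ⟶ E'.pt, ∀ m : M, E.ι m ≫ h = E'.ι m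

end ModuleEnds

section InternalHom

variable {M : Type u₁} [Category.{v₁} M]

/-- Internal Hom data for a left `C`-module category: a bifunctor
`H : Mᵒᵖ × M ⥤ C` together with bijections
`(X ⟶ uhom(m,n)) ≃ (X ▷ m ⟶ n)` natural in all three variables. -/
structure InternalHom (ρ : LeftModuleStr C M) where
  H : Mᵒᵖ × M ⥤ C
  repr : ∀ (X : C) (m n : M), (X ⟶ H.obj (op m, n)) ≃ ((ρ.act.obj X).obj m ⟶ n)
  repr_natural : ∀ {X X' : C} (f : X ⟶ X') (m n : M) (u : X' ⟶ H.obj (op m, n)),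
    repr X m n (f ≫ u) = (ρ.act.map f).app m ≫ repr X' m n u
  repr_natural_m : ∀ (X : C) {m m' : M} (f : m' ⟶ m) (n : M)
      (u : X ⟶ H.obj (op m, n)),
    repr X m' n (u ≫ smap H f (𝟙 n)) = (ρ.act.obj X).map f ≫ repr X m n u
  repr_natural_n : ∀ (X : C) (m : M) {n n' : M} (g : n ⟶ n')
      (u : X ⟶ H.obj (op m, n)),
    repr X m n' (u ≫ smap H (𝟙 m) g) = repr X m n u ≫ g

variable [RightRigidCategory C]

/-- Internal Hom data for the right `C`-module category `Mᵒᵖ` opposite to a left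
`C`-module category `M` (with action `m̄ ◁ X = (Xᘁ ▷ m)‾`): a bifunctor
`H' : M × Mᵒᵖ ⥤ C` (with `H'.obj (m, op n) = uhom_{Mᵒᵖ}(m̄, n̄)`) together with
bijections `(X ⟶ uhom_{Mᵒᵖ}(m̄, n̄)) ≃ (m̄ ◁ X ⟶ n̄) = (n ⟶ Xᘁ ▷ m)`
natural in all three variables. -/
structure OpInternalHom (ρ : LeftModuleStr C M) where
  H : M × Mᵒᵖ ⥤ C
  repr : ∀ (X : C) (m n : M), (X ⟶ H.obj (m, op n)) ≃ (n ⟶ (ρ.act.obj Xᘁ).obj m)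
  repr_natural : ∀ {X X' : C} (f : X ⟶ X') (m n : M) (u : X' ⟶ H.obj (m, op n)),
    repr X m n (f ≫ u) = repr X' m n u ≫ (ρ.act.map (fᘁ)).app m
  repr_natural_m : ∀ (X : C) {m m' : M} (f : m ⟶ m') (n : M)
      (u : X ⟶ H.obj (m, op n)),
    repr X m' n (u ≫ H.map ((f, 𝟙 (op n)) : ((m, op n) : M × Mᵒᵖ) ⟶ (m', op n))) =
      repr X m n u ≫ (ρ.act.obj Xᘁ).map f
  repr_natural_n : ∀ (X : C) (m : M) {n n' : M} (g : n' ⟶ n)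
      (u : X ⟶ H.obj (m, op n)),
    repr X m n' (u ≫ H.map ((𝟙 m, g.op) : ((m, op n) : M × Mᵒᵖ) ⟶ (m, op n'))) =
      g ≫ repr X m n u

end InternalHom


/-!
## STATEMENT 7

Parameter theorem for module ends: if the pointwise module ends of a
`Fun(A,B)`-valued functor exist, they assemble into a functor which is a module
end in the functor category, and which evaluates at every object of `A` to a
pointwise module end.  (Theorem 3.7 of the paper.)
-/

section Whisker

variable {M : Type u₁} [Category.{v₁} M] {A : Type u₂} [Category.{v₂} A]
  {B : Type u₃} [Category.{v₃} B]
  {C : Type u} [Category.{v} C] [MonoidalCategory C] [RightRigidCategory C]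
  {ρ : LeftModuleStr C M} {S : Mᵒᵖ × M ⥤ A}

/-- A pre-balancing transported along a functor. -/
def PreBalancing.whisker (β : PreBalancing ρ S) (F : A ⥤ B) :
    PreBalancing ρ (S ⋙ F) where
  iso X m n := F.mapIso (β.iso X m n)
  natural := by
    intro X m m' n n' f g
    have h := β.natural X f g
    dsimp only [smap, Functor.comp_map, Functor.mapIso_hom]
    rw [← F.map_comp, ← F.map_comp, h]
  natural_tensor := by
    intro X X' f m n
    have h := β.natural_tensor f m n
    dsimp only [smap, Functor.comp_map, Functor.mapIso_hom]
    rw [← F.map_comp, ← F.map_comp, h]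

/-- A wedge transported along a functor. -/
def ModuleEndCone.whisker {β : PreBalancing ρ S} {P : C → Prop}
    (E : ModuleEndCone β P) (F : A ⥤ B) :
    ModuleEndCone (β.whisker F) P where
  pt := F.obj E.pt
  π m := F.map (E.π m)
  dinatural := by
    intro m n f
    have h := E.dinatural f
    dsimp only [smap, Functor.comp_map]
    rw [← F.map_comp, ← F.map_comp, h]
  compat := by
    intro X hX m
    have h := E.compat X hX m
    dsimp only [smap, Functor.comp_map, PreBalancing.whisker, Functor.mapIso_hom]
    simp only [← F.map_comp]
    rw [h]

end Whisker

section ParamAux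

variable {M : Type u₁} [Category.{v₁} M] {A : Type u₂} [Category.{v₂} A]
  {B : Type u₃} [Category.{v₃} B]
  {C : Type u} [Category.{v} C] [MonoidalCategory C] [RightRigidCategory C]
  {ρ : LeftModuleStr C M} {S : Mᵒᵖ × M ⥤ (A ⥤ B)}
  {β : PreBalancing ρ S}

/-- Transport a pointwise cone at `a` to a pointwise cone at `a'` along `f : a ⟶ a'`. -/
def coneShift {a a' : A} (f : a ⟶ a')
    (K : ModuleEndCone (β.whisker ((evaluation A B).obj a)) (fun _ => True)) :
    ModuleEndCone (β.whisker ((evaluation A B).obj a')) (fun _ => True) where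
  pt := K.pt
  π m := K.π m ≫ (S.obj (op m, m)).map f
  dinatural := by
    intro m n g
    have h1 := (smap S (𝟙 m) g).naturality f
    have h2 := K.dinatural g
    have h3 := (smap S g (𝟙 n)).naturality f
    dsimp only [smap, PreBalancing.whisker, Functor.comp_map, evaluation_obj_map] at *
    simp only [Category.assoc]
    rw [h1, reassoc_of% h2, h3]
  compat := by
    intro X _ m
    have h1 := (smap S (evActHom ρ X m) (𝟙 m)).naturality f
    have h2 := K.compat X trivial m
    have h3 := ((β.iso X ((ρ.act.obj X).obj m) m).hom).naturality f
    have h4 := (smap S ((ρ.assoc Xᘁ X m).hom) (𝟙 m)).naturality f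
    dsimp only [smap, PreBalancing.whisker, Functor.comp_map, evaluation_obj_map,
      Functor.mapIso_hom] at *
    simp only [Category.assoc]
    rw [h1, reassoc_of% h2, reassoc_of% h3, h4]

section build

variable (c : ∀ a : A,
    ModuleEndCone (β.whisker ((evaluation A B).obj a)) (fun _ => True))
  (hc : ∀ a : A, IsModuleEnd (c a))

/-- The pointwise module ends assemble into a functor `A ⥤ B`. -/
noncomputable def paramFunctor : A ⥤ B where
  obj a := (c a).pt
  map {a a'} f := (hc a' (coneShift f (c a))).choose
  map_id a := ((hc a (coneShift (𝟙 a) (c a))).choose_spec.2 (𝟙 _) (fun m => by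
    simp [coneShift])).symm
  map_comp {a a' a''} f g := by
    refine ((hc a'' (coneShift (f ≫ g) (c a))).choose_spec.2 _ (fun m => ?_)).symm
    have hf := (hc a' (coneShift f (c a))).choose_spec.1 m
    have hg := (hc a'' (coneShift g (c a'))).choose_spec.1 m
    dsimp only [coneShift] at *
    simp only [Category.assoc]
    rw [hg, reassoc_of% hf, Functor.map_comp]

lemma paramFunctor_map_spec {a a' : A} (f : a ⟶ a') (m : M) :
    (paramFunctor c hc).map f ≫ (c a').π m = (c a).π m ≫ (S.obj (op m, m)).map f :=
  (hc a' (coneShift f (c a))).choose_spec.1 m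

/-- The wedge legs as natural transformations. -/
noncomputable def paramπ (m : M) : paramFunctor c hc ⟶ S.obj (op m, m) where
  app a := (c a).π m
  naturality a a' f := paramFunctor_map_spec c hc f m

/-- The assembled module-end cone in the functor category. -/
noncomputable def paramCone : ModuleEndCone β (fun _ => True) where
  pt := paramFunctor c hc
  π m := paramπ c hc m
  dinatural := by
    intro m n f
    ext a
    exact (c a).dinatural f
  compat := by
    intro X _ m
    ext a
    exact (c a).compat X trivial m

end build

end ParamAux

variable {k : Type w} [Field k]

theorem statement7
    {C : Type u} [Category.{v} C] [Abelian C] [CategoryTheory.Linear k C]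
    [MonoidalCategory C] [MonoidalPreadditive C] [MonoidalLinear k C]
    [RigidCategory C] [Simple (𝟙_ C)]
    {M : Type u₁} [Category.{v₁} M] [Abelian M] [CategoryTheory.Linear k M]
    {A : Type u₂} [Category.{v₂} A] {B : Type u₃} [Category.{v₃} B]
    (ρ : LeftModuleStr C M)
    (S : Mᵒᵖ × M ⥤ (A ⥤ B))
    (β : PreBalancing ρ S)
    -- given, for every `a : A`, a module end of the evaluated functor
    -- `S_a = S(-,-)(a)` with its induced pre-balancing:
    (c : ∀ a : A,
      ModuleEndCone (β.whisker ((evaluation A B).obj a)) (fun _ => True))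
    (hc : ∀ a : A, IsModuleEnd (c a)) :
    -- the module end of `S` exists in the functor category `Fun(A, B)`, its
    -- evaluation at every `a : A` is a module end of `S_a`, and in particular
    -- it agrees with the given pointwise module ends:
    ∃ E : ModuleEndCone β (fun _ => True), IsModuleEnd E ∧
      ∀ a : A, IsModuleEnd (E.whisker ((evaluation A B).obj a)) ∧
        Nonempty ((E.whisker ((evaluation A B).obj a)).pt ≅ (c a).pt) := by
  refine ⟨paramCone c hc, ?_, fun a => ⟨hc a, ⟨Iso.refl _⟩⟩⟩
  intro E'
  -- its pointwise whiskerings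
  have spec : ∀ a : A, ∀ m : M,
      (hc a (E'.whisker ((evaluation A B).obj a))).choose ≫ (c a).π m =
        (E'.π m).app a :=
    fun a => (hc a (E'.whisker ((evaluation A B).obj a))).choose_spec.1
  have huniq : ∀ (a : A) (y : (E'.pt).obj a ⟶ (c a).pt),
      (∀ m : M, y ≫ (c a).π m = (E'.π m).app a) →
        y = (hc a (E'.whisker ((evaluation A B).obj a))).choose :=
    fun a y hy => (hc a (E'.whisker ((evaluation A B).obj a))).choose_spec.2 y hy
  refine ⟨{ app := fun a => (hc a (E'.whisker ((evaluation A B).obj a))).choose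
            naturality := ?_ }, fun m => ?_, ?_⟩
  · intro a a' f
    dsimp only [paramCone]
    -- both candidates factor the shifted cone of `E'.whisker (ev a)` along `f`
    have h1 : ∀ m : M,
        ((E'.pt).map f ≫ (hc a' (E'.whisker ((evaluation A B).obj a'))).choose) ≫
            (c a').π m =
          (coneShift f (E'.whisker ((evaluation A B).obj a))).π m := by
      intro m
      refine (Category.assoc _ _ _).trans ((congrArg (fun t => (E'.pt).map f ≫ t) (spec a' m)).trans ?_)
      dsimp only [coneShift, ModuleEndCone.whisker]
      exact (E'.π m).naturality f
    have h2 : ∀ m : M,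
        ((hc a (E'.whisker ((evaluation A B).obj a))).choose ≫
            (paramFunctor c hc).map f) ≫ (c a').π m =
          (coneShift f (E'.whisker ((evaluation A B).obj a))).π m := by
      intro m
      simp only [Category.assoc]
      refine (Category.assoc _ _ _).trans ((congrArg (fun t => (hc a (E'.whisker ((evaluation A B).obj a))).choose ≫ t) (paramFunctor_map_spec c hc f m)).trans ?_)
      refine (Category.assoc _ _ _).symm.trans ((congrArg (fun t => t ≫ (S.obj (op m, m)).map f) (spec a m)).trans ?_)
      rfl
    have u := (hc a' (coneShift f (E'.whisker ((evaluation A B).obj a)))).choose_spec.2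
    exact (u _ h1).trans (u _ h2).symm
  · ext a
    exact spec a m
  · intro h' hh'
    ext a
    refine huniq a (h'.app a) (fun m => ?_)
    exact congrArg (fun t => NatTrans.app t a) (hh' m)
end TensorModuleEnd
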